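/- Let p be an odd prime, ν, m ≥ 1 with m ≥ ν, and α, β integers coprime to p. If f(x) = p^{2ν} + pᵐβx + αx² admits a proper factorization f = a(x)·b(x) in ℤ[[x]] with both factors non-units, then the constant coefficients satisfy a₀ = b₀ = p^ν (up to sign). -/

import Mathlib

theorem stmt_9 (p : ℕ) (hp : p.Prime) (hodd : Odd p) (ν m : ℕ)
    (hν : 1 ≤ ν) (hm : ν ≤ m) (α β : ℤ)
    (hα : Int.gcd (p : ℤ) α = 1) (hβ : Int.gcd (p : ℤ) β = 1)
    (a b : PowerSeries ℤ) (ha : ¬ IsUnit a) (hb : ¬ IsUnit b)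
    (hf : PowerSeries.C ((p : ℤ) ^ (2 * ν)) +
      PowerSeries.C ((p : ℤ) ^ m * β) * PowerSeries.X +
      PowerSeries.C α * PowerSeries.X ^ 2 = a * b) :
    (PowerSeries.constantCoeff a = (p : ℤ) ^ ν ∧ PowerSeries.constantCoeff b = (p : ℤ) ^ ν) ∨
    (PowerSeries.constantCoeff a = -(p : ℤ) ^ ν ∧ PowerSeries.constantCoeff b = -(p : ℤ) ^ ν) := by
  set A := PowerSeries.constantCoeff a with hA
  set B := PowerSeries.constantCoeff b with hB
  set a1 := PowerSeries.coeff 1 a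
  set b1 := PowerSeries.coeff 1 b
  have hpZ : Prime (p : ℤ) := Nat.prime_iff_prime_int.mp hp
  have hp0 : (p : ℤ) ≠ 0 := Nat.cast_ne_zero.mpr hp.pos.ne'
  have hcancel : ∀ (k : ℕ) (c : ℤ), (p : ℤ) ^ (k + 1) ∣ (p : ℤ) ^ k * c → (p : ℤ) ∣ c := by
    intro k c h
    rw [pow_succ', mul_comm ((p:ℤ)) ((p:ℤ)^k)] at h
    exact (mul_dvd_mul_iff_left (pow_ne_zero k hp0)).mp h
  -- constant coefficient equation
  have h0 : A * B = (p : ℤ) ^ (2 * ν) := by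
    have := congrArg (PowerSeries.constantCoeff) hf
    simpa using this.symm
  -- coefficient of x
  have h1 : A * b1 + a1 * B = (p : ℤ) ^ m * β := by
    have := congrArg (PowerSeries.coeff 1) hf
    rw [PowerSeries.coeff_mul, Finset.Nat.sum_antidiagonal_eq_sum_range_succ_mk] at this
    simp only [map_add, PowerSeries.coeff_C, PowerSeries.coeff_C_mul, PowerSeries.coeff_X,
      PowerSeries.coeff_X_pow, Finset.sum_range_succ, Finset.sum_range_zero] at this
    norm_num at this
    linarith [this]
  -- coefficient of x^2
  have h2 : A * PowerSeries.coeff 2 b + a1 * b1 + PowerSeries.coeff 2 a * B = α := by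
    have := congrArg (PowerSeries.coeff 2) hf
    rw [PowerSeries.coeff_mul, Finset.Nat.sum_antidiagonal_eq_sum_range_succ_mk] at this
    simp only [map_add, PowerSeries.coeff_C, PowerSeries.coeff_C_mul, PowerSeries.coeff_X,
      PowerSeries.coeff_X_pow, Finset.sum_range_succ, Finset.sum_range_zero] at this
    norm_num at this
    linarith [this]
  -- natAbs of A and B are powers of p
  obtain ⟨i, hi, hAi⟩ : ∃ i ≤ 2 * ν, A.natAbs = p ^ i := by
    rw [← Nat.dvd_prime_pow hp]
    have h' : A ∣ (p : ℤ) ^ (2 * ν) := ⟨B, h0.symm⟩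
    have := Int.natAbs_dvd_natAbs.mpr h'
    rwa [Int.natAbs_pow, Int.natAbs_natCast] at this
  obtain ⟨j, hj, hBj⟩ : ∃ j ≤ 2 * ν, B.natAbs = p ^ j := by
    rw [← Nat.dvd_prime_pow hp]
    have h' : B ∣ (p : ℤ) ^ (2 * ν) := ⟨A, by linarith [h0]⟩
    have := Int.natAbs_dvd_natAbs.mpr h'
    rwa [Int.natAbs_pow, Int.natAbs_natCast] at this
  have hij : i + j = 2 * ν := by
    have : (A * B).natAbs = ((p : ℤ) ^ (2 * ν)).natAbs := by rw [h0]
    rw [Int.natAbs_mul, hAi, hBj, Int.natAbs_pow, Int.natAbs_natCast, ← pow_add] at this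
    exact Nat.pow_right_injective hp.two_le this
  -- explicit forms of A and B
  have hAe : A = (p : ℤ) ^ i ∨ A = -(p : ℤ) ^ i := by
    rcases Int.natAbs_eq A with h' | h'
    · left; rw [h', hAi]; push_cast; ring
    · right; rw [h', hAi]; push_cast; ring
  have hBe : B = (p : ℤ) ^ j ∨ B = -(p : ℤ) ^ j := by
    rcases Int.natAbs_eq B with h' | h'
    · left; rw [h', hBj]; push_cast; ring
    · right; rw [h', hBj]; push_cast; ring
  -- i ≥ 1, j ≥ 1 from non-unitness
  have hi1 : 1 ≤ i := by
    by_contra h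
    apply ha
    rw [PowerSeries.isUnit_iff_constantCoeff]
    have hi0 : i = 0 := by omega
    rw [← hA, Int.isUnit_iff]
    rcases hAe with h' | h' <;> rw [h', hi0] <;> simp
  have hj1 : 1 ≤ j := by
    by_contra h
    apply hb
    rw [PowerSeries.isUnit_iff_constantCoeff]
    have hj0 : j = 0 := by omega
    rw [← hB, Int.isUnit_iff]
    rcases hBe with h' | h' <;> rw [h', hj0] <;> simp
  -- p does not divide α, a1, b1
  rw [← Int.isCoprime_iff_gcd_eq_one] at hα
  have hpα : ¬ ((p : ℤ) ∣ α) := fun hd => hpZ.not_unit (hα.isUnit_of_dvd' dvd_rfl hd)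
  have hpA : (p : ℤ) ∣ A := by
    rcases hAe with h' | h' <;> rw [h']
    · exact dvd_pow_self _ (by omega)
    · exact Dvd.dvd.neg_right (dvd_pow_self _ (by omega))
  have hpB : (p : ℤ) ∣ B := by
    rcases hBe with h' | h' <;> rw [h']
    · exact dvd_pow_self _ (by omega)
    · exact Dvd.dvd.neg_right (dvd_pow_self _ (by omega))
  have hpa1b1 : ¬ ((p : ℤ) ∣ a1 * b1) := by
    intro hd
    apply hpα
    have h2' : α = A * PowerSeries.coeff 2 b + a1 * b1 + PowerSeries.coeff 2 a * B := h2.symm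
    rw [h2']
    exact dvd_add (dvd_add (Dvd.dvd.mul_right hpA _) hd) (Dvd.dvd.mul_left hpB _)
  have hpa1 : ¬ ((p : ℤ) ∣ a1) := fun h => hpa1b1 (h.mul_right _)
  have hpb1 : ¬ ((p : ℤ) ∣ b1) := fun h => hpa1b1 (h.mul_left _)
  -- valuation argument: i = ν
  have hiν : i = ν := by
    by_contra hne
    rcases Nat.lt_or_ge i ν with hlt | hge
    · have hjgt : i + 1 ≤ j := by omega
      have d1 : (p : ℤ) ^ (i + 1) ∣ a1 * B := by
        apply Dvd.dvd.mul_left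
        rcases hBe with h' | h' <;> rw [h']
        · exact pow_dvd_pow _ hjgt
        · exact Dvd.dvd.neg_right (pow_dvd_pow _ hjgt)
      have d2 : (p : ℤ) ^ (i + 1) ∣ (p : ℤ) ^ m * β :=
        Dvd.dvd.mul_right (pow_dvd_pow _ (by omega)) _
      have d3 : (p : ℤ) ^ (i + 1) ∣ A * b1 := by
        have e : A * b1 = (p : ℤ) ^ m * β - a1 * B := by linarith [h1]
        rw [e]; exact dvd_sub d2 d1
      have d4 : (p : ℤ) ^ (i + 1) ∣ (p : ℤ) ^ i * b1 := by
        rcases hAe with h' | h' <;> rw [h'] at d3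
        · exact d3
        · rw [show -(p : ℤ) ^ i * b1 = -((p : ℤ) ^ i * b1) from by ring] at d3
          exact (dvd_neg).mp d3
      exact hpb1 (hcancel i b1 d4)
    · have hilt : j + 1 ≤ i := by omega
      have d1 : (p : ℤ) ^ (j + 1) ∣ A * b1 := by
        apply Dvd.dvd.mul_right
        rcases hAe with h' | h' <;> rw [h']
        · exact pow_dvd_pow _ hilt
        · exact Dvd.dvd.neg_right (pow_dvd_pow _ hilt)
      have d2 : (p : ℤ) ^ (j + 1) ∣ (p : ℤ) ^ m * β :=
        Dvd.dvd.mul_right (pow_dvd_pow _ (by omega)) _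
      have d3 : (p : ℤ) ^ (j + 1) ∣ a1 * B := by
        have e : a1 * B = (p : ℤ) ^ m * β - A * b1 := by linarith [h1]
        rw [e]; exact dvd_sub d2 d1
      have d4 : (p : ℤ) ^ (j + 1) ∣ (p : ℤ) ^ j * a1 := by
        rcases hBe with h' | h' <;> rw [h'] at d3
        · rwa [mul_comm] at d3
        · rw [show a1 * -(p : ℤ) ^ j = -((p : ℤ) ^ j * a1) from by ring] at d3
          exact (dvd_neg).mp d3
      exact hpa1 (hcancel j a1 d4)
  have hjν : j = ν := by omega
  rw [hiν] at hAe
  rw [hjν] at hBe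
  have hpν : (0 : ℤ) < (p : ℤ) ^ ν := by positivity
  rcases hAe with h' | h'
  · left
    refine ⟨h', ?_⟩
    have e := h0
    rw [h', two_mul, pow_add] at e
    exact mul_left_cancel₀ (ne_of_gt hpν) e
  · right
    refine ⟨h', ?_⟩
    have e : (p : ℤ) ^ ν * (-B) = (p : ℤ) ^ ν * (p : ℤ) ^ ν := by
      have e2 := h0
      rw [h', two_mul, pow_add] at e2
      linarith [e2]
    have := mul_left_cancel₀ (ne_of_gt hpν) e
    linarith
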